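/- Let M be a set and rk a diversity rank function on M. The induced independence relation x ⊥ y, defined by rk(x ∪ y) = rk(x) + rk(y), satisfies: (Empty Set) x ⊥ ∅; (Symmetry) if x ⊥ y then y ⊥ x; (Decomposition) if x ⊥ (y ∪ z) then x ⊥ y; (Mixing) if x ⊥ y and (x ∪ y) ⊥ z then x ⊥ (y ∪ z); (Constancy) if z ⊥ z then z ⊥ x, for all finite x, y, z ⊆ M. -/
import Mathlib


/-- `rk` is a diversity rank function: it maps finite sets to nonnegative reals and
satisfies axioms R1--R4. -/
def IsDivRank {α : Type*} [DecidableEq α] (rk : Finset α → ℝ) : Prop :=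
  (∀ x : Finset α, 0 ≤ rk x) ∧
  rk ∅ = 0 ∧
  (∀ x y : Finset α, rk x ≤ rk (x ∪ y) ∧ rk (x ∪ y) ≤ rk x + rk y) ∧
  (∀ x y z : Finset α, rk (x ∪ y) = rk x → rk (x ∪ y ∪ z) = rk (x ∪ z)) ∧
  (∀ x y z : Finset α, rk (x ∪ y ∪ z) = rk x + rk (y ∪ z) → rk (x ∪ y) = rk x + rk y)

/-- `x` and `y` are independent (written `x ⊥ y`) under `rk`. -/
def Indep {α : Type*} [DecidableEq α] (rk : Finset α → ℝ) (x y : Finset α) : Prop :=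
  rk (x ∪ y) = rk x + rk y

theorem indep_axioms {α : Type*} [DecidableEq α] (rk : Finset α → ℝ)
    (h : IsDivRank rk) :
    (∀ x : Finset α, Indep rk x ∅) ∧
    (∀ x y : Finset α, Indep rk x y → Indep rk y x) ∧
    (∀ x y z : Finset α, Indep rk x (y ∪ z) → Indep rk x y) ∧
    (∀ x y z : Finset α, Indep rk x y → Indep rk (x ∪ y) z → Indep rk x (y ∪ z)) ∧
    (∀ x z : Finset α, Indep rk z z → Indep rk z x) := by
  obtain ⟨hpos, hemp, hsub, hR3, hR4⟩ := h
  refine ⟨?_, ?_, ?_, ?_, ?_⟩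
  · intro x
    simp [Indep, hemp]
  · intro x y hxy
    unfold Indep at *
    rw [Finset.union_comm, hxy]; ring
  · intro x y z hxy
    unfold Indep at *
    exact hR4 x y z (by rwa [Finset.union_assoc])
  · intro x y z h1 h2
    unfold Indep at *
    rw [← Finset.union_assoc]
    have hyz := (hsub y z).2
    have hx := (hsub x (y ∪ z)).2
    rw [← Finset.union_assoc] at hx
    have : rk (x ∪ y ∪ z) = rk x + rk y + rk z := by rw [h2, h1]
    nlinarith
  · intro x z hzz
    unfold Indep at *
    have hz0 : rk z = 0 := by
      rw [Finset.union_self] at hzz; linarith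
    have h1 : rk (∅ ∪ z) = rk (∅ : Finset α) := by
      simp [hz0, hemp]
    have := hR3 ∅ z x h1
    simpa [hz0] using this
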